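/- Let C be a conic with foci F and F', o its pedal circle with respect to F with center O. For X on o, let L be the line through X orthogonal to FX, let Y be the second intersection of L with o, and Z an intersection of L with C. Then F'Z is parallel to OX and FZ is parallel to OY. -/

import Mathlib

open Real EuclideanGeometry

private lemma pedal_cross1 (p x y a b : ℝ) (hp0 : 0 < p) (hp1 : p < 1)
    (h1 : x^2 + y^2 = 1)
    (h2 : (a - x) * (x - p) + (b - y) * y = 0)
    (h3 : a^2 + b^2 / (1 - p^2) = 1) :
    (a + p) * y = b * x := by
  have hp : (1 : ℝ) - p^2 ≠ 0 := by nlinarith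
  have h3' : a^2 * (1 - p^2) + b^2 = 1 - p^2 := by
    field_simp at h3; linarith
  have hc : ((a + p) * y - b * x)^2 = 0 := by
    linear_combination
      (2*p*(p + a - x) - p^2 + (a^2 + b^2) - 2*(1 + a*p - p*x)
        - ((x^2 + y^2 - 1) + ((a - x)*(x - p) + (b - y)*y))) * h1
      + (-2*p*x - 2*(1 + a*p - p*x)
        - ((x^2 + y^2 - 1) + ((a - x)*(x - p) + (b - y)*y))) * h2
      + h3'
  have := pow_eq_zero_iff (n := 2) (by norm_num) |>.mp hc
  linarith

private lemma pedal_cross2 (p x y a b u v : ℝ) (hp0 : 0 < p) (hp1 : p < 1)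
    (h1 : x^2 + y^2 = 1)
    (hY1 : u^2 + v^2 = 1)
    (hYL : (u - x) * (x - p) + (v - y) * y = 0)
    (hZL : (a - x) * (x - p) + (b - y) * y = 0)
    (hc1 : (a + p) * y = b * x)
    (hne : ¬ (u = x ∧ v = y)) :
    (a - p) * v = b * u := by
  have hx1 : (x - 1) * (x - 1) ≥ 0 := mul_self_nonneg _
  have hQ : (x - p)^2 + y^2 > 0 := by nlinarith [mul_pos hp0 (by linarith : (0:ℝ) < 1 - p)]
  set Q := (x - p)^2 + y^2 with hQdef
  set tau := (v - y) * (x - p) - (u - x) * y with htaudef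
  have hquad : tau * (tau - 2 * p * y) = 0 := by
    linear_combination Q * hY1 - Q * h1
      - (((u - x) * (x - p) + (v - y) * y) + 2*x*(x-p) + 2*y^2) * hYL
  rcases mul_eq_zero.mp hquad with h0 | h0
  · exfalso; apply hne
    constructor
    · have hu : (u - x) * Q = 0 := by
        linear_combination (x - p) * hYL - y * h0
      rcases mul_eq_zero.mp hu with h | h
      · linarith
      · exact absurd h (ne_of_gt hQ)
    · have hv : (v - y) * Q = 0 := by
        linear_combination y * hYL + (x - p) * h0
      rcases mul_eq_zero.mp hv with h | h
      · linarith
      · exact absurd h (ne_of_gt hQ)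
  · have hc2Q : ((a - p) * v - b * u) * Q = 0 := by
      linear_combination Q * h0 + tau * hZL + ((a-p)*y - b*(x-p)) * hYL + Q * hc1
    rcases mul_eq_zero.mp hc2Q with h | h
    · linarith
    · exact absurd h (ne_of_gt hQ)

/-- Let `C : x² + y²/(1-p²) = 1` with foci `F = (p,0)`, `F' = (-p,0)` (`0 < p < 1`),
and let the unit circle (center `O = 0`) be the pedal circle with respect to `F`.
For `X` on the unit circle, let `L` be the line through `X` orthogonal to `FX`,
`Y` the second intersection of `L` with the unit circle, and `Z` an intersection of `L`
with `C`. Then `F'Z ∥ OX` and `FZ ∥ OY`. -/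
theorem pedal_circle_parallelism (p : ℝ) (hp0 : 0 < p) (hp1 : p < 1)
    (F F' X Y Z : EuclideanSpace ℝ (Fin 2))
    (hF0 : F 0 = p) (hF1 : F 1 = 0) (hF'0 : F' 0 = -p) (hF'1 : F' 1 = 0)
    (hX : ‖X‖ = 1) (hY : ‖Y‖ = 1)
    (hYL : inner ℝ (Y - X) (X - F) = (0 : ℝ))
    (htangent : Y = X → X 1 = 0)
    (hZL : inner ℝ (Z - X) (X - F) = (0 : ℝ))
    (hZC : (Z 0) ^ 2 + (Z 1) ^ 2 / (1 - p ^ 2) = 1) :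
    (∃ r : ℝ, Z - F' = r • X) ∧ (∃ s : ℝ, Z - F = s • Y) := by
  have h1 : (X 0)^2 + (X 1)^2 = 1 := by
    have := congrArg (·^2) hX
    simp only [EuclideanSpace.norm_eq, Fin.sum_univ_two, Real.norm_eq_abs, sq_abs] at this
    rw [Real.sq_sqrt (by positivity)] at this
    simpa using this
  have hY1 : (Y 0)^2 + (Y 1)^2 = 1 := by
    have := congrArg (·^2) hY
    simp only [EuclideanSpace.norm_eq, Fin.sum_univ_two, Real.norm_eq_abs, sq_abs] at this
    rw [Real.sq_sqrt (by positivity)] at this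
    simpa using this
  have hYL' : (Y 0 - X 0) * (X 0 - p) + (Y 1 - X 1) * (X 1) = 0 := by
    have := hYL
    simp only [PiLp.inner_apply, RCLike.inner_apply, Fin.sum_univ_two, PiLp.sub_apply,
      hF0, hF1, map_sub, conj_trivial] at this
    linear_combination this
  have hZL' : (Z 0 - X 0) * (X 0 - p) + (Z 1 - X 1) * (X 1) = 0 := by
    have := hZL
    simp only [PiLp.inner_apply, RCLike.inner_apply, Fin.sum_univ_two, PiLp.sub_apply,
      hF0, hF1, map_sub, conj_trivial] at this
    linear_combination this
  have hc1 : (Z 0 + p) * (X 1) = Z 1 * X 0 :=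
    pedal_cross1 p (X 0) (X 1) (Z 0) (Z 1) hp0 hp1 h1 (by linear_combination hZL') hZC
  have hc2 : (Z 0 - p) * (Y 1) = Z 1 * Y 0 := by
    by_cases hYX : Y = X
    · have hy0 : X 1 = 0 := htangent hYX
      have hx2 : (X 0)^2 = 1 := by rw [hy0] at h1; simpa using h1
      have hxp : X 0 - p ≠ 0 := by intro h; nlinarith
      have haz : Z 0 = X 0 := by
        have h' : (Z 0 - X 0) * (X 0 - p) = 0 := by
          rw [hy0] at hZL'; linarith [hZL']
        rcases mul_eq_zero.mp h' with h | h
        · linarith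
        · exact absurd h hxp
      have hb0 : Z 1 = 0 := by
        have hp2 : (1 : ℝ) - p^2 > 0 := by nlinarith
        have : (Z 1)^2 / (1 - p^2) = 0 := by rw [haz, hx2] at hZC; linarith
        have h2 : (Z 1)^2 = 0 := by
          have := (div_eq_zero_iff.mp this)
          rcases this with h | h
          · exact h
          · exact absurd h (ne_of_gt hp2)
        exact pow_eq_zero_iff (n := 2) (by norm_num) |>.mp h2
      rw [hYX, hy0, hb0]; ring
    · refine pedal_cross2 p (X 0) (X 1) (Z 0) (Z 1) (Y 0) (Y 1) hp0 hp1 h1 hY1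
        (by linear_combination hYL') (by linear_combination hZL') hc1 ?_
      rintro ⟨h0, h01⟩
      apply hYX
      ext i
      fin_cases i
      · exact h0
      · exact h01
  constructor
  · refine ⟨(Z 0 + p) * X 0 + Z 1 * X 1, ?_⟩
    have c0 : (Z - F') 0 = (((Z 0 + p) * X 0 + Z 1 * X 1) • X) 0 := by
      simp only [PiLp.sub_apply, PiLp.smul_apply, smul_eq_mul, hF'0]
      linear_combination (-(Z 0 + p)) * h1 + (X 1) * hc1
    have c1 : (Z - F') 1 = (((Z 0 + p) * X 0 + Z 1 * X 1) • X) 1 := by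
      simp only [PiLp.sub_apply, PiLp.smul_apply, smul_eq_mul, hF'1]
      linear_combination (-(Z 1)) * h1 - (X 0) * hc1
    ext i
    fin_cases i
    · exact c0
    · exact c1
  · refine ⟨(Z 0 - p) * Y 0 + Z 1 * Y 1, ?_⟩
    have c0 : (Z - F) 0 = (((Z 0 - p) * Y 0 + Z 1 * Y 1) • Y) 0 := by
      simp only [PiLp.sub_apply, PiLp.smul_apply, smul_eq_mul, hF0]
      linear_combination (-(Z 0 - p)) * hY1 + (Y 1) * hc2
    have c1 : (Z - F) 1 = (((Z 0 - p) * Y 0 + Z 1 * Y 1) • Y) 1 := by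
      simp only [PiLp.sub_apply, PiLp.smul_apply, smul_eq_mul, hF1]
      linear_combination (-(Z 1)) * hY1 - (Y 0) * hc2
    ext i
    fin_cases i
    · exact c0
    · exact c1
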